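/- In the quantum Bruhat graph of a finite Weyl group W, for any two elements u, v ∈ W there exists a directed path from u to v. -/

import Mathlib

noncomputable section

open scoped Classical
open scoped RealInnerProductSpace
open Finset

variable {V : Type*} [NormedAddCommGroup V] [InnerProductSpace ℝ V] [FiniteDimensional ℝ V]

/-- A (reduced, crystallographic) root system in a Euclidean space, with a fixed
choice of positive roots `Rpos` and simple roots `Δ`. -/
structure IsRootSystem (R Rpos Δ : Finset V) : Prop where
  nonzero : ∀ α ∈ R, α ≠ (0 : V)
  reduced : ∀ α ∈ R, ∀ c : ℝ, c • α ∈ R → c = 1 ∨ c = -1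
  crystallographic : ∀ α ∈ R, ∀ β ∈ R, ∃ n : ℤ, 2 * ⟪β, α⟫ / ⟪α, α⟫ = (n : ℝ)
  reflect_mem : ∀ α ∈ R, ∀ β ∈ R, β - (2 * ⟪β, α⟫ / ⟪α, α⟫) • α ∈ R
  pos_subset : Rpos ⊆ R
  pos_or_neg : ∀ α ∈ R, α ∈ Rpos ∨ -α ∈ Rpos
  not_both : ∀ α ∈ Rpos, -α ∉ Rpos
  simple_subset : Δ ⊆ Rpos
  simple_nonneg_comb : ∀ α ∈ Rpos, ∃ c : V → ℝ, (∀ β ∈ Δ, 0 ≤ c β) ∧ α = ∑ β ∈ Δ, c β • β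
  simple_indep : LinearIndependent ℝ (fun β : (Δ : Set V) => (β : V))

/-- The coroot `α^∨ = 2α/(α,α)` of a root `α`, in the Euclidean identification. -/
def coroot (α : V) : V := (2 / ⟪α, α⟫) • α

/-- The half-sum `ρ` of the positive roots. -/
def rho (Rpos : Finset V) : V := (2 : ℝ)⁻¹ • ∑ α ∈ Rpos, α

/-- The reflection `r_α` across the hyperplane orthogonal to `α`. -/
def sref (α : V) : V ≃ₗᵢ[ℝ] V := Submodule.reflection (ℝ ∙ α)ᗮ

/-- The Weyl group: the subgroup of isometries generated by the reflections in the roots. -/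
def weylGroup (R : Finset V) : Subgroup (V ≃ₗᵢ[ℝ] V) :=
  Subgroup.closure { g | ∃ α ∈ R, g = sref α }

/-- The length of a Weyl group element: the number of positive roots it sends negative. -/
def lenW (Rpos : Finset V) (w : V ≃ₗᵢ[ℝ] V) : ℕ :=
  (Rpos.filter (fun α => w α ∉ Rpos)).card

/-- Dominance: nonnegative pairing against every positive root. -/
def isDominant (Rpos : Finset V) (lam : V) : Prop := ∀ α ∈ Rpos, 0 ≤ ⟪lam, α⟫

/-- Dominance order: `μ ≤ lam` iff `lam - μ` is a nonnegative rational combination of the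
coroots of the roots in `S`. -/
def domLE (S : Finset V) (μ lam : V) : Prop :=
  ∃ c : V → ℚ, (∀ β ∈ S, 0 ≤ c β) ∧ lam - μ = ∑ β ∈ S, (c β : ℝ) • coroot β

/-- The coroot lattice `Q^∨`. -/
def corootLattice (R : Finset V) : Submodule ℤ V := Submodule.span ℤ (coroot '' (R : Set V))

/-- The quantum Bruhat graph edge relation: `w → w r_α` when either a Bruhat cover or a
quantum edge. -/
def qbgEdge (Rpos : Finset V) (w w' : V ≃ₗᵢ[ℝ] V) : Prop :=
  ∃ α ∈ Rpos, w' = w * sref α ∧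
    ((lenW Rpos w' : ℝ) = (lenW Rpos w : ℝ) + 1 ∨
     (lenW Rpos w' : ℝ) = (lenW Rpos w : ℝ) - ⟪coroot α, (2 : ℝ) • rho Rpos⟫ + 1)

set_option linter.unusedSectionVars false
set_option maxHeartbeats 1000000

section aux
variable {V : Type*} [NormedAddCommGroup V] [InnerProductSpace ℝ V] [FiniteDimensional ℝ V]

lemma sref_apply' (α x : V) : sref α x = x - (2 * ⟪x, α⟫ / ⟪α, α⟫) • α := by
  rw [sref, Submodule.reflection_orthogonal_apply, Submodule.reflection_singleton_apply,
    real_inner_comm α x]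
  simp only [RCLike.ofReal_real_eq_id, id_eq]
  rw [← real_inner_self_eq_norm_sq α, mul_div_assoc]
  module

lemma sref_sref (α x : V) : sref α (sref α x) = x := Submodule.reflection_reflection _ _

lemma sref_inv (α : V) : (sref α)⁻¹ = sref α := Submodule.reflection_inv

lemma sref_neg (α : V) : sref (-α) = sref α := by
  ext x
  rw [sref_apply', sref_apply']
  simp [inner_neg_neg, inner_neg_right, smul_neg, neg_smul, neg_div]

lemma sref_conj (w : V ≃ₗᵢ[ℝ] V) (α : V) : sref (w α) = w * sref α * w⁻¹ := by
  ext x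
  have h1 : (w * sref α * w⁻¹) x = w (sref α (w⁻¹ x)) := rfl
  rw [sref_apply', h1, sref_apply']
  rw [map_sub, map_smul]
  have hx : w (w⁻¹ x) = x := w.apply_symm_apply x
  have hinn : ⟪w⁻¹ x, α⟫ = ⟪x, w α⟫ := by
    rw [← LinearIsometryEquiv.inner_map_map w (w⁻¹ x) α, hx]
  have hαα : ⟪w α, w α⟫ = ⟪α, α⟫ := LinearIsometryEquiv.inner_map_map w α α
  rw [hx, hinn, hαα]
variable {R Rpos Δ : Finset V}

namespace IsRootSystem

lemma inner_self_pos' (h : IsRootSystem R Rpos Δ) {α : V} (hα : α ∈ R) : 0 < ⟪α, α⟫ := by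
  have h1 : (0:ℝ) ≤ ⟪α, α⟫ := real_inner_self_nonneg
  rcases h1.lt_or_eq with h2 | h2
  · exact h2
  · exact absurd (real_inner_self_nonpos.mp (le_of_eq h2.symm)) (h.nonzero α hα)

lemma sref_mem' (h : IsRootSystem R Rpos Δ) {α β : V} (hα : α ∈ R) (hβ : β ∈ R) :
    sref α β ∈ R := by
  rw [sref_apply']; exact h.reflect_mem α hα β hβ

lemma sref_self' (h : IsRootSystem R Rpos Δ) {α : V} (hα : α ∈ R) : sref α α = -α := by
  rw [sref_apply', mul_div_assoc, div_self (ne_of_gt (h.inner_self_pos' hα)), mul_one,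
    two_smul]
  abel

lemma neg_mem' (h : IsRootSystem R Rpos Δ) {α : V} (hα : α ∈ R) : -α ∈ R := by
  have := h.sref_mem' hα hα
  rwa [h.sref_self' hα] at this

lemma notpos_iff (h : IsRootSystem R Rpos Δ) {α : V} (hα : α ∈ R) :
    α ∉ Rpos ↔ -α ∈ Rpos := by
  constructor
  · intro hn
    rcases h.pos_or_neg α hα with h1 | h1
    · exact absurd h1 hn
    · exact h1
  · intro hn hp
    exact h.not_both α hp hn

lemma weyl_maps (h : IsRootSystem R Rpos Δ) {w : V ≃ₗᵢ[ℝ] V} (hw : w ∈ weylGroup R) :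
    ∀ α ∈ R, w α ∈ R := by
  have key : ∀ w : V ≃ₗᵢ[ℝ] V, w ∈ weylGroup R →
      ((∀ α ∈ R, w α ∈ R) ∧ (∀ α ∈ R, w⁻¹ α ∈ R)) := by
    intro w hw
    induction hw using Subgroup.closure_induction with
    | mem x hx =>
      obtain ⟨α, hα, rfl⟩ := hx
      refine ⟨fun β hβ => h.sref_mem' hα hβ, fun β hβ => ?_⟩
      rw [sref_inv]
      exact h.sref_mem' hα hβ
    | one => exact ⟨fun β hβ => hβ, fun β hβ => hβ⟩
    | mul x y hx hy ihx ihy =>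
      refine ⟨fun β hβ => ihx.1 _ (ihy.1 β hβ), fun β hβ => ?_⟩
      rw [mul_inv_rev]
      exact ihy.2 _ (ihx.2 β hβ)
    | inv x hx ihx => exact ⟨fun β hβ => ihx.2 β hβ, by simpa using fun β hβ => ihx.1 β hβ⟩
  exact (key w hw).1

lemma coeff_eq (h : IsRootSystem R Rpos Δ) {c d : V → ℝ}
    (hcd : ∑ β ∈ Δ, c β • β = ∑ β ∈ Δ, d β • β) : ∀ β ∈ Δ, c β = d β := by
  have hli : LinearIndependent ℝ (fun β : ↥Δ => (β : V)) := h.simple_indep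
  have hli' := linearIndependent_iff'.mp hli
  intro β hβ
  have hz : ∑ i ∈ (Finset.univ : Finset ↥Δ), (c i - d i) • (i : V) = 0 := by
    have := Finset.sum_coe_sort Δ (fun β => (c β - d β) • β)
    rw [this]
    simp only [sub_smul, Finset.sum_sub_distrib, hcd, sub_self]
  have h0 : c β - d β = 0 := hli' Finset.univ (fun i => c i - d i) hz ⟨β, hβ⟩ (Finset.mem_univ _)
  linarith

end IsRootSystem
namespace IsRootSystem

lemma sref_simple_pos (h : IsRootSystem R Rpos Δ) {α β : V} (hβ : β ∈ Δ) (hα : α ∈ Rpos)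
    (hne : α ≠ β) : sref β α ∈ Rpos := by
  have hβp : β ∈ Rpos := h.simple_subset hβ
  have hβR : β ∈ R := h.pos_subset hβp
  have hαR : α ∈ R := h.pos_subset hα
  have hmem : sref β α ∈ R := h.sref_mem' hβR hαR
  by_contra hcon
  have hneg : -(sref β α) ∈ Rpos := (h.notpos_iff hmem).mp hcon
  obtain ⟨c, hc, hcα⟩ := h.simple_nonneg_comb α hα
  obtain ⟨d, hd, hdα⟩ := h.simple_nonneg_comb _ hneg
  set k : ℝ := 2 * ⟪α, β⟫ / ⟪β, β⟫ with hk
  have hsref : sref β α = α - k • β := sref_apply' β α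
  have hsum : ∑ γ ∈ Δ, (c γ + d γ) • γ = ∑ γ ∈ Δ, (fun γ => if γ = β then k else 0) γ • γ := by
    have hrhs : ∑ γ ∈ Δ, (fun γ => if γ = β then k else 0) γ • γ = k • β := by
      simp only [ite_smul, zero_smul]
      rw [Finset.sum_ite_eq' Δ β (fun γ => k • γ), if_pos hβ]
    rw [hrhs]
    simp only [add_smul, Finset.sum_add_distrib, ← hcα, ← hdα]
    rw [hsref]
    abel
  have hco := h.coeff_eq hsum
  have hzero : ∀ γ ∈ Δ, γ ≠ β → c γ = 0 := by
    intro γ hγ hγβ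
    have := hco γ hγ
    rw [if_neg hγβ] at this
    have := hd γ hγ
    have := hc γ hγ
    simp only at *
    linarith [hco γ hγ, hd γ hγ, hc γ hγ]
  have hαβ : α = c β • β := by
    rw [hcα, Finset.sum_eq_single_of_mem β hβ]
    intro γ hγ hγβ
    rw [hzero γ hγ hγβ, zero_smul]
  have hred := h.reduced β hβR (c β) (by rw [← hαβ]; exact hαR)
  rcases hred with h1 | h1
  · rw [h1, one_smul] at hαβ
    exact hne hαβ
  · rw [h1, neg_smul, one_smul] at hαβ
    exact h.not_both α hα (by rw [hαβ, neg_neg]; exact hβp)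

lemma exists_simple_inner_pos (h : IsRootSystem R Rpos Δ) {α : V} (hα : α ∈ Rpos) :
    ∃ β ∈ Δ, 0 < ⟪α, β⟫ := by
  by_contra hcon
  push_neg at hcon
  obtain ⟨c, hc, hcα⟩ := h.simple_nonneg_comb α hα
  have hpos := h.inner_self_pos' (h.pos_subset hα)
  have : ⟪α, α⟫ ≤ 0 := by
    nth_rewrite 2 [hcα]
    rw [inner_sum]
    apply Finset.sum_nonpos
    intro γ hγ
    rw [real_inner_smul_right]
    exact mul_nonpos_of_nonneg_of_nonpos (hc γ hγ) (hcon γ hγ)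
  linarith

lemma sum_sref_simple (h : IsRootSystem R Rpos Δ) {β : V} (hβ : β ∈ Δ) :
    ∑ α ∈ Rpos, sref β α = (∑ α ∈ Rpos, α) - β - β := by
  have hβp : β ∈ Rpos := h.simple_subset hβ
  have hβR : β ∈ R := h.pos_subset hβp
  have hinj : Function.Injective (sref β) := (sref β).injective
  have himg : (Rpos.erase β).image (sref β) = Rpos.erase β := by
    apply Finset.eq_of_subset_of_card_le
    · intro γ hγ
      rw [Finset.mem_image] at hγ
      obtain ⟨a, ha, rfl⟩ := hγ
      rw [Finset.mem_erase] at ha ⊢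
      refine ⟨?_, h.sref_simple_pos hβ ha.2 ha.1⟩
      intro hab
      have : a = sref β β := by rw [← sref_sref β a, hab]
      rw [h.sref_self' hβR] at this
      exact h.not_both β hβp (this ▸ ha.2)
    · rw [Finset.card_image_of_injective _ hinj]
  calc ∑ α ∈ Rpos, sref β α
      = (∑ α ∈ Rpos.erase β, sref β α) + sref β β := (Finset.sum_erase_add _ _ hβp).symm
    _ = (∑ γ ∈ Rpos.erase β, γ) + sref β β := by
        congr 1
        conv_rhs => rw [← himg]
        rw [Finset.sum_image (fun x _ y _ hxy => hinj hxy)]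
    _ = (∑ α ∈ Rpos, α) - β - β := by
        rw [h.sref_self' hβR, Finset.sum_erase_eq_sub hβp]
        abel

lemma inner_simple_two_rho (h : IsRootSystem R Rpos Δ) {β : V} (hβ : β ∈ Δ) :
    ⟪β, (2:ℝ) • rho Rpos⟫ = ⟪β, β⟫ := by
  have hβR : β ∈ R := h.pos_subset (h.simple_subset hβ)
  have h2rho : (2:ℝ) • rho Rpos = ∑ α ∈ Rpos, α := by
    rw [rho, smul_smul]
    norm_num
  set S : V := ∑ α ∈ Rpos, α with hS
  have hadj : ⟪sref β β, S⟫ = ⟪β, sref β S⟫ := by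
    rw [← LinearIsometryEquiv.inner_map_map (sref β) β (sref β S), sref_sref]
  have hmapS : sref β S = S - β - β := by
    rw [hS, map_sum]
    exact h.sum_sref_simple hβ
  rw [h.sref_self' hβR, hmapS] at hadj
  rw [inner_neg_left, inner_sub_right, inner_sub_right] at hadj
  rw [h2rho]
  linarith

lemma coroot_two_rho (h : IsRootSystem R Rpos Δ) {β : V} (hβ : β ∈ Δ) :
    ⟪coroot β, (2:ℝ) • rho Rpos⟫ = 2 := by
  have hβR : β ∈ R := h.pos_subset (h.simple_subset hβ)
  rw [coroot, real_inner_smul_left, h.inner_simple_two_rho hβ,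
    div_mul_cancel₀ _ (ne_of_gt (h.inner_self_pos' hβR))]

end IsRootSystem
namespace IsRootSystem

lemma sref_simple_erase (h : IsRootSystem R Rpos Δ) {β a : V} (hβ : β ∈ Δ)
    (ha : a ∈ Rpos.erase β) : sref β a ∈ Rpos.erase β := by
  have hβp : β ∈ Rpos := h.simple_subset hβ
  have hβR : β ∈ R := h.pos_subset hβp
  rw [Finset.mem_erase] at ha ⊢
  refine ⟨?_, h.sref_simple_pos hβ ha.2 ha.1⟩
  intro hab
  have : a = sref β β := by rw [← sref_sref β a, hab]
  rw [h.sref_self' hβR] at this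
  exact h.not_both β hβp (this ▸ ha.2)

lemma simple_edge (h : IsRootSystem R Rpos Δ) {β : V} {w : V ≃ₗᵢ[ℝ] V} (hβ : β ∈ Δ)
    (hw : w ∈ weylGroup R) : qbgEdge Rpos w (w * sref β) := by
  have hβp : β ∈ Rpos := h.simple_subset hβ
  have hβR : β ∈ R := h.pos_subset hβp
  have hwβR : w β ∈ R := h.weyl_maps hw β hβR
  refine ⟨β, hβp, rfl, ?_⟩
  set N : ℕ := ((Rpos.erase β).filter (fun γ => w γ ∉ Rpos)).card with hN
  have claim1 : lenW Rpos w = N + (if w β ∈ Rpos then 0 else 1) := by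
    rw [lenW, show Rpos.filter (fun α => w α ∉ Rpos)
        = (insert β (Rpos.erase β)).filter (fun α => w α ∉ Rpos) from by
          rw [Finset.insert_erase hβp], Finset.filter_insert]
    by_cases hcase : w β ∈ Rpos
    · rw [if_neg (not_not_intro hcase), if_pos hcase, add_zero]
    · rw [if_pos hcase, if_neg hcase, Finset.card_insert_of_notMem
        (fun hmem => Finset.notMem_erase β Rpos (Finset.mem_filter.mp hmem).1)]
  have hmul : ∀ x : V, (w * sref β) x = w (sref β x) := fun x => rfl
  have hQβ : ((w * sref β) β ∉ Rpos) ↔ w β ∈ Rpos := by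
    rw [hmul, h.sref_self' hβR, map_neg]
    have hnegR : -(w β) ∈ R := h.neg_mem' hwβR
    rw [h.notpos_iff hnegR, neg_neg]
  have claim2 : lenW Rpos (w * sref β) = N + (if w β ∈ Rpos then 1 else 0) := by
    rw [lenW, show Rpos.filter (fun α => (w * sref β) α ∉ Rpos)
        = (insert β (Rpos.erase β)).filter (fun α => (w * sref β) α ∉ Rpos) from by
          rw [Finset.insert_erase hβp], Finset.filter_insert]
    have hcardN : ((Rpos.erase β).filter (fun γ => (w * sref β) γ ∉ Rpos)).card = N := by
      rw [hN]
      apply Finset.card_bij (fun a _ => sref β a)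
      · intro a ha
        rw [Finset.mem_filter] at ha ⊢
        refine ⟨h.sref_simple_erase hβ ha.1, ?_⟩
        rw [hmul] at ha
        exact ha.2
      · intro a ha b hb hab
        exact (sref β).injective hab
      · intro b hb
        rw [Finset.mem_filter] at hb
        refine ⟨sref β b, ?_, sref_sref β b⟩
        rw [Finset.mem_filter, hmul, sref_sref]
        exact ⟨h.sref_simple_erase hβ hb.1, hb.2⟩
    by_cases hcase : w β ∈ Rpos
    · rw [if_pos (hQβ.mpr hcase), if_pos hcase, Finset.card_insert_of_notMem
        (fun hmem => Finset.notMem_erase β Rpos (Finset.mem_filter.mp hmem).1), hcardN]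
    · rw [if_neg (fun hq => hcase (hQβ.mp hq)), if_neg hcase, add_zero, hcardN]
  by_cases hcase : w β ∈ Rpos
  · left
    rw [claim1, claim2, if_pos hcase, if_pos hcase]
    push_cast
    ring
  · right
    rw [claim1, claim2, if_neg hcase, if_neg hcase, h.coroot_two_rho hβ]
    push_cast
    ring

end IsRootSystem
namespace IsRootSystem

lemma descent (h : IsRootSystem R Rpos Δ) {α : V} (hα : α ∈ Rpos) (hαΔ : α ∉ Δ) :
    ∃ β ∈ Δ, ∃ γ ∈ Rpos, sref β γ = α ∧
      (Rpos.filter (fun δ => ⟪δ, (2:ℝ) • rho Rpos⟫ < ⟪γ, (2:ℝ) • rho Rpos⟫)).card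
        < (Rpos.filter (fun δ => ⟪δ, (2:ℝ) • rho Rpos⟫ < ⟪α, (2:ℝ) • rho Rpos⟫)).card := by
  obtain ⟨β, hβ, hip⟩ := h.exists_simple_inner_pos hα
  have hβR : β ∈ R := h.pos_subset (h.simple_subset hβ)
  have hne : α ≠ β := fun hab => hαΔ (hab ▸ hβ)
  set γ : V := sref β α with hγdef
  have hγ : γ ∈ Rpos := h.sref_simple_pos hβ hα hne
  refine ⟨β, hβ, γ, hγ, sref_sref β α, ?_⟩
  set S : V := (2:ℝ) • rho Rpos with hS
  have hht : ⟪γ, S⟫ < ⟪α, S⟫ := by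
    rw [hγdef, sref_apply', inner_sub_left, real_inner_smul_left,
      h.inner_simple_two_rho hβ]
    have h1 : 0 < 2 * ⟪α, β⟫ / ⟪β, β⟫ :=
      div_pos (by linarith) (h.inner_self_pos' hβR)
    have h2 : 0 < ⟪β, β⟫ := h.inner_self_pos' hβR
    nlinarith
  apply Finset.card_lt_card
  have hsub : Rpos.filter (fun δ => ⟪δ, S⟫ < ⟪γ, S⟫)
      ⊆ Rpos.filter (fun δ => ⟪δ, S⟫ < ⟪α, S⟫) := by
    intro δ hδ
    rw [Finset.mem_filter] at hδ ⊢
    exact ⟨hδ.1, lt_trans hδ.2 hht⟩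
  rw [Finset.ssubset_iff_of_subset hsub]
  exact ⟨γ, Finset.mem_filter.mpr ⟨hγ, hht⟩, fun hmem =>
    lt_irrefl _ (Finset.mem_filter.mp hmem).2⟩

lemma sref_mem_simple (h : IsRootSystem R Rpos Δ) : ∀ n : ℕ, ∀ α ∈ Rpos,
    (Rpos.filter (fun δ => ⟪δ, (2:ℝ) • rho Rpos⟫ < ⟪α, (2:ℝ) • rho Rpos⟫)).card ≤ n →
    sref α ∈ Submonoid.closure {g : V ≃ₗᵢ[ℝ] V | ∃ β ∈ Δ, g = sref β} := by
  intro n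
  induction n with
  | zero =>
    intro α hα hcard
    by_cases hΔ : α ∈ Δ
    · exact Submonoid.subset_closure ⟨α, hΔ, rfl⟩
    · obtain ⟨β, hβ, γ, hγ, hγα, hlt⟩ := h.descent hα hΔ
      omega
  | succ n ih =>
    intro α hα hcard
    by_cases hΔ : α ∈ Δ
    · exact Submonoid.subset_closure ⟨α, hΔ, rfl⟩
    · obtain ⟨β, hβ, γ, hγ, hγα, hlt⟩ := h.descent hα hΔ
      have hγM := ih γ hγ (by omega)
      have hβM : sref β ∈ Submonoid.closure {g : V ≃ₗᵢ[ℝ] V | ∃ β ∈ Δ, g = sref β} :=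
        Submonoid.subset_closure ⟨β, hβ, rfl⟩
      have heq : sref α = sref β * sref γ * (sref β)⁻¹ := by
        rw [← hγα, sref_conj (sref β) γ]
      rw [heq, sref_inv]
      exact mul_mem (mul_mem hβM hγM) hβM

lemma weyl_mem_simple (h : IsRootSystem R Rpos Δ) {g : V ≃ₗᵢ[ℝ] V} (hg : g ∈ weylGroup R) :
    g ∈ Submonoid.closure {g : V ≃ₗᵢ[ℝ] V | ∃ β ∈ Δ, g = sref β} := by
  set M := Submonoid.closure {g : V ≃ₗᵢ[ℝ] V | ∃ β ∈ Δ, g = sref β} with hM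
  have hMinv : ∀ x ∈ M, x⁻¹ ∈ M := by
    intro x hx
    induction hx using Submonoid.closure_induction with
    | mem y hy =>
      obtain ⟨β, hβ, rfl⟩ := hy
      rw [sref_inv]
      exact Submonoid.subset_closure ⟨β, hβ, rfl⟩
    | one => simpa using one_mem M
    | mul x y hx hy ihx ihy =>
      rw [mul_inv_rev]
      exact mul_mem ihy ihx
  have hpos : ∀ α ∈ Rpos, sref α ∈ M := fun α hα =>
    h.sref_mem_simple _ α hα le_rfl
  induction hg using Subgroup.closure_induction with
  | mem x hx =>
    obtain ⟨α, hα, rfl⟩ := hx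
    rcases h.pos_or_neg α hα with h1 | h1
    · exact hpos α h1
    · rw [← sref_neg]
      exact hpos _ h1
  | one => exact one_mem M
  | mul x y hx hy ihx ihy => exact mul_mem ihx ihy
  | inv x hx ihx => exact hMinv x ihx

end IsRootSystem

end aux

theorem stmt_13 (R Rpos Δ : Finset V) (h : IsRootSystem R Rpos Δ)
    (u v : V ≃ₗᵢ[ℝ] V) (hu : u ∈ weylGroup R) (hv : v ∈ weylGroup R) :
    Relation.ReflTransGen (qbgEdge Rpos) u v := by
  have hpath : ∀ g ∈ Submonoid.closure {g : V ≃ₗᵢ[ℝ] V | ∃ β ∈ Δ, g = sref β},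
      g ∈ weylGroup R ∧ ∀ w ∈ weylGroup R, Relation.ReflTransGen (qbgEdge Rpos) w (w * g) := by
    intro g hg
    induction hg using Submonoid.closure_induction with
    | mem x hx =>
      obtain ⟨β, hβ, rfl⟩ := hx
      refine ⟨Subgroup.subset_closure ⟨β, h.pos_subset (h.simple_subset hβ), rfl⟩,
        fun w hw => Relation.ReflTransGen.single (h.simple_edge hβ hw)⟩
    | one =>
      exact ⟨one_mem _, fun w hw => by rw [mul_one]⟩
    | mul x y hx hy ihx ihy =>
      refine ⟨mul_mem ihx.1 ihy.1, fun w hw => ?_⟩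
      have h1 := ihx.2 w hw
      have h2 := ihy.2 (w * x) (mul_mem hw ihx.1)
      rw [mul_assoc] at h2
      exact h1.trans h2
  have hg : u⁻¹ * v ∈ weylGroup R := mul_mem (inv_mem hu) hv
  have := (hpath _ (h.weyl_mem_simple hg)).2 u hu
  rwa [mul_inv_cancel_left] at this
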